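/- Let σ : I → ℝ be twice differentiable on an open interval I, satisfying 4·σ''(t) = σ(t)·(3σ(t)² + 2t)·(σ(t)² + 2t) for all t ∈ I, and suppose σ(t) ≠ 0 for all t ∈ I. Then s := σ² is twice differentiable and satisfies s''(t) = s'(t)²/(2·s(t)) + (3/2)·s(t)³ + 4t·s(t)² + 2t²·s(t) for all t ∈ I. -/

import Mathlib

theorem stmt_4 (I : Set ℝ) (hI : IsOpen I) (hI' : IsPreconnected I) (σ : ℝ → ℝ)
    (hσ1 : ∀ t ∈ I, DifferentiableAt ℝ σ t)
    (hσ2 : ∀ t ∈ I, DifferentiableAt ℝ (deriv σ) t)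
    (heq : ∀ t ∈ I, 4 * deriv (deriv σ) t
      = σ t * (3 * (σ t) ^ 2 + 2 * t) * ((σ t) ^ 2 + 2 * t))
    (hne : ∀ t ∈ I, σ t ≠ 0) :
    (∀ t ∈ I, DifferentiableAt ℝ (fun u => (σ u) ^ 2) t) ∧
    (∀ t ∈ I, DifferentiableAt ℝ (deriv (fun u => (σ u) ^ 2)) t) ∧
    (∀ t ∈ I, deriv (deriv (fun u => (σ u) ^ 2)) t
      = (deriv (fun u => (σ u) ^ 2) t) ^ 2 / (2 * (σ t) ^ 2)
        + (3 / 2) * ((σ t) ^ 2) ^ 3 + 4 * t * ((σ t) ^ 2) ^ 2 + 2 * t ^ 2 * (σ t) ^ 2) := by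
  have hd1 : ∀ t ∈ I, DifferentiableAt ℝ (fun u => (σ u) ^ 2) t := fun t ht =>
    (hσ1 t ht).pow 2
  have hderiv1 : ∀ t ∈ I, deriv (fun u => (σ u) ^ 2) t = 2 * σ t * deriv σ t := by
    intro t ht
    have := ((hσ1 t ht).hasDerivAt.fun_pow 2).deriv
    simpa [mul_comm, mul_assoc] using this
  have heq1 : ∀ t ∈ I, deriv (fun u => (σ u) ^ 2) =ᶠ[nhds t] fun u => 2 * σ u * deriv σ u := by
    intro t ht
    filter_upwards [hI.mem_nhds ht] with u hu using hderiv1 u hu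
  have hd2' : ∀ t ∈ I, DifferentiableAt ℝ (fun u => 2 * σ u * deriv σ u) t := by
    intro t ht
    exact ((differentiableAt_const 2).mul (hσ1 t ht)).mul (hσ2 t ht)
  have hd2 : ∀ t ∈ I, DifferentiableAt ℝ (deriv (fun u => (σ u) ^ 2)) t := by
    intro t ht
    exact (hd2' t ht).congr_of_eventuallyEq (heq1 t ht)
  refine ⟨hd1, hd2, ?_⟩
  intro t ht
  have h2 : deriv (deriv (fun u => (σ u) ^ 2)) t = deriv (fun u => 2 * σ u * deriv σ u) t :=
    (heq1 t ht).deriv_eq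
  have h3 : deriv (fun u => 2 * σ u * deriv σ u) t
      = 2 * (deriv σ t * deriv σ t) + 2 * (σ t * deriv (deriv σ) t) := by
    have := (((hasDerivAt_const t (2:ℝ)).fun_mul (hσ1 t ht).hasDerivAt).fun_mul
      (hσ2 t ht).hasDerivAt).deriv
    rw [this]; ring
  rw [h2, h3, hderiv1 t ht]
  have key := heq t ht
  have hσne := hne t ht
  field_simp
  linear_combination (σ t) * key
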